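/- Let m ≥ 1 and let ρ₀ be the pair partition of Fin (2m) whose blocks are {2k, 2k+1} for k = 0, ..., m−1 (pairing consecutive elements). The number of pair partitions ρ of Fin (2m) such that the join ρ ∨ ρ₀ in the partition lattice is the one-block partition equals (m−1)! · 2^(m−1). -/

import Mathlib

namespace Stmt14
open Finset

variable {m : ℕ}

/-- the partner: flips the last bit, pairing 2k with 2k+1 -/
def gg (x : Fin (2*m)) : Fin (2*m) :=
  ⟨2*(x.val/2) + (1 - x.val % 2), by have := x.2; omega⟩

lemma gg_gg (x : Fin (2*m)) : gg (gg x) = x := by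
  unfold gg; apply Fin.ext; simp only []; omega

lemma gg_ne (x : Fin (2*m)) : gg x ≠ x := by
  unfold gg; intro h; have := congrArg Fin.val h; simp only [] at this; omega

lemma half_gg (x : Fin (2*m)) : (gg x).val / 2 = x.val / 2 := by
  unfold gg; simp only []; omega

lemma eq_or_eq_gg {x y : Fin (2*m)} (h : x.val/2 = y.val/2) : y = x ∨ y = gg x := by
  unfold gg
  rcases Nat.lt_or_ge x.val y.val with hl | hl
  · right; apply Fin.ext; simp only []; omega
  · rcases Nat.eq_or_lt_of_le hl with he | hl'
    · left; exact Fin.ext he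
    · right; apply Fin.ext; simp only []; omega

def Conn (f : Fin (2*m) → Fin (2*m)) : Prop :=
  ∀ s : Finset (Fin (2*m)), s.Nonempty → (∀ x ∈ s, f x ∈ s ∧ gg x ∈ s) → s = Finset.univ

variable {m : ℕ}

noncomputable def otherFn (ρ : Finpartition (Finset.univ : Finset (Fin (2*m))))
    (x : Fin (2*m)) : Fin (2*m) :=
  if h : ((ρ.part x).erase x).Nonempty then ((ρ.part x).erase x).min' h else x

variable {ρ ρ' : Finpartition (Finset.univ : Finset (Fin (2*m)))}

lemma part_eq_pair (hc : ∀ B ∈ ρ.parts, B.card = 2) (x : Fin (2*m)) :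
    ρ.part x = {x, otherFn ρ x} ∧ otherFn ρ x ≠ x := by
  have hx : x ∈ ρ.part x := ρ.mem_part (mem_univ x)
  have hp : ρ.part x ∈ ρ.parts := ρ.part_mem.2 (mem_univ x)
  have hcard : (ρ.part x).card = 2 := hc _ hp
  have hec : ((ρ.part x).erase x).card = 1 := by
    rw [card_erase_of_mem hx, hcard]
  obtain ⟨y, hy⟩ := card_eq_one.1 hec
  have hne : ((ρ.part x).erase x).Nonempty := by rw [hy]; exact ⟨y, mem_singleton_self y⟩
  have hof : otherFn ρ x = y := by
    rw [otherFn, dif_pos hne]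
    have huniq : ∀ z ∈ (ρ.part x).erase x, z = y := by
      intro z hz
      have : z ∈ ({y} : Finset (Fin (2*m))) := by rw [← hy]; exact hz
      exact mem_singleton.1 this
    exact huniq _ (min'_mem _ _)
  have hymem : y ∈ (ρ.part x).erase x := hy ▸ mem_singleton_self y
  have hyx : y ≠ x := ne_of_mem_erase hymem
  rw [hof]
  constructor
  · symm
    apply eq_of_subset_of_card_le
    · intro z hz
      rcases mem_insert.1 hz with rfl | hz
      · exact hx
      · rw [mem_singleton.1 hz]; exact mem_of_mem_erase hymem
    · rw [hcard, card_pair (fun h => hyx h.symm)]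
  · exact hyx

lemma otherFn_mem (hc : ∀ B ∈ ρ.parts, B.card = 2) (x : Fin (2*m)) :
    otherFn ρ x ∈ ρ.part x := by
  rw [(part_eq_pair hc x).1]; exact mem_insert_of_mem (mem_singleton_self _)

lemma otherFn_ne (hc : ∀ B ∈ ρ.parts, B.card = 2) (x : Fin (2*m)) :
    otherFn ρ x ≠ x := (part_eq_pair hc x).2

lemma otherFn_invol (hc : ∀ B ∈ ρ.parts, B.card = 2) (x : Fin (2*m)) :
    otherFn ρ (otherFn ρ x) = x := by
  have h1 := part_eq_pair hc x
  have hpeq : ρ.part (otherFn ρ x) = ρ.part x :=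
    ρ.part_eq_of_mem (ρ.part_mem.2 (mem_univ x)) (otherFn_mem hc x)
  have h2 := part_eq_pair hc (otherFn ρ x)
  have : otherFn ρ (otherFn ρ x) ∈ ρ.part x := by
    rw [← hpeq]; exact otherFn_mem hc _
  rw [h1.1, mem_insert, mem_singleton] at this
  rcases this with h | h
  · exact h
  · exact absurd h h2.2

lemma rel_iff_mem_part (P : Finpartition (Finset.univ : Finset (Fin (2*m)))) (x y : Fin (2*m)) :
    (∃ B ∈ P.parts, x ∈ B ∧ y ∈ B) ↔ y ∈ P.part x := by
  constructor
  · rintro ⟨B, hB, hx, hy⟩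
    rwa [P.part_eq_of_mem hB hx]
  · intro hy
    exact ⟨P.part x, P.part_mem.2 (mem_univ x), P.mem_part (mem_univ x), hy⟩

lemma rel_iff (hc : ∀ B ∈ ρ.parts, B.card = 2) (x y : Fin (2*m)) :
    (∃ B ∈ ρ.parts, x ∈ B ∧ y ∈ B) ↔ (y = x ∨ y = otherFn ρ x) := by
  rw [rel_iff_mem_part, (part_eq_pair hc x).1, mem_insert, mem_singleton]

lemma part_ext (h : ∀ x, ρ.part x = ρ'.part x) : ρ = ρ' := by
  apply le_antisymm
  · intro B hB
    obtain ⟨x, hx⟩ := ρ.nonempty_of_mem_parts hB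
    refine ⟨ρ'.part x, ρ'.part_mem.2 (mem_univ x), ?_⟩
    rw [← h x, ρ.part_eq_of_mem hB hx]
  · intro B hB
    obtain ⟨x, hx⟩ := ρ'.nonempty_of_mem_parts hB
    refine ⟨ρ.part x, ρ.part_mem.2 (mem_univ x), ?_⟩
    rw [h x, ρ'.part_eq_of_mem hB hx]

lemma otherFn_inj (hc : ∀ B ∈ ρ.parts, B.card = 2) (hc' : ∀ B ∈ ρ'.parts, B.card = 2)
    (h : otherFn ρ = otherFn ρ') : ρ = ρ' := by
  apply part_ext
  intro x
  rw [(part_eq_pair hc x).1, (part_eq_pair hc' x).1, h]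

variable {m : ℕ}

lemma top_of_univ_mem {P : Finpartition (Finset.univ : Finset (Fin (2*m)))}
    (h : Finset.univ ∈ P.parts) : P = ⊤ := by
  apply le_antisymm le_top
  intro b hb
  exact ⟨Finset.univ, h, subset_univ b⟩

lemma part_eq_univ_of_top {P : Finpartition (Finset.univ : Finset (Fin (2*m)))}
    (hP : P = ⊤) (x : Fin (2*m)) : P.part x = Finset.univ := by
  have hmem : P.part x ∈ (⊤ : Finpartition (Finset.univ : Finset (Fin (2*m)))).parts := by
    rw [← hP]; exact P.part_mem.2 (mem_univ x)
  exact mem_singleton.1 (Finpartition.parts_top_subset _ hmem)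

variable {ρ ρ₀ : Finpartition (Finset.univ : Finset (Fin (2*m)))}

lemma join_iff_conn (hm : 0 < m)
    (hρ₀ : ∀ x y : Fin (2 * m),
      (∃ B ∈ ρ₀.parts, x ∈ B ∧ y ∈ B) ↔ (x : ℕ) / 2 = (y : ℕ) / 2)
    (hc : ∀ B ∈ ρ.parts, B.card = 2) :
    (∀ P : Finpartition (Finset.univ : Finset (Fin (2 * m))),
      ρ ≤ P → ρ₀ ≤ P → P = ⊤) ↔ Conn (otherFn ρ) := by
  constructor
  · intro hjoin s hsne hscl
    set st : Setoid (Fin (2*m)) :=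
      ⟨fun x y => (x ∈ s ↔ y ∈ s),
        ⟨fun _ => Iff.rfl, fun h => h.symm, fun h h' => h.trans h'⟩⟩ with hst
    haveI : DecidableRel st.r := fun x y => inferInstanceAs (Decidable (_ ↔ _))
    set P := Finpartition.ofSetoid st with hPdef
    have hrel : ∀ x y : Fin (2*m), y ∈ P.part x ↔ (x ∈ s ↔ y ∈ s) := by
      intro x y
      exact Finpartition.mem_part_ofSetoid_iff_rel
    have hiff : ∀ x : Fin (2*m), (x ∈ s ↔ otherFn ρ x ∈ s) ∧ (x ∈ s ↔ gg x ∈ s) := by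
      intro x
      constructor
      · constructor
        · intro hx; exact (hscl x hx).1
        · intro hx
          have := (hscl _ hx).1
          rwa [otherFn_invol hc] at this
      · constructor
        · intro hx; exact (hscl x hx).2
        · intro hx
          have := (hscl _ hx).2
          rwa [gg_gg] at this
    have h1 : ρ ≤ P := by
      intro B hB
      obtain ⟨x, hx⟩ := ρ.nonempty_of_mem_parts hB
      refine ⟨P.part x, P.part_mem.2 (mem_univ x), ?_⟩
      intro y hy
      rw [hrel]
      rcases (rel_iff hc x y).1 ⟨B, hB, hx, hy⟩ with rfl | rfl
      · rfl
      · exact (hiff x).1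
    have h2 : ρ₀ ≤ P := by
      intro B hB
      obtain ⟨x, hx⟩ := ρ₀.nonempty_of_mem_parts hB
      refine ⟨P.part x, P.part_mem.2 (mem_univ x), ?_⟩
      intro y hy
      rw [hrel]
      rcases eq_or_eq_gg ((hρ₀ x y).1 ⟨B, hB, hx, hy⟩) with rfl | rfl
      · rfl
      · exact (hiff x).2
    have hP := hjoin P h1 h2
    obtain ⟨x0, hx0⟩ := hsne
    ext y
    simp only [mem_univ, iff_true]
    have hy : y ∈ P.part x0 := by rw [part_eq_univ_of_top hP]; exact mem_univ y
    exact ((hrel x0 y).1 hy).1 hx0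
  · intro hconn P hρP hρ₀P
    have hz0 : (0:ℕ) < 2*m := by omega
    let z0 : Fin (2*m) := ⟨0, hz0⟩
    have hsP : P.part z0 ∈ P.parts := P.part_mem.2 (mem_univ z0)
    have hscl : ∀ x ∈ P.part z0, otherFn ρ x ∈ P.part z0 ∧ gg x ∈ P.part z0 := by
      intro x hx
      constructor
      · obtain ⟨C, hC, hsub⟩ := hρP (ρ.part_mem.2 (mem_univ x))
        have hCs : C = P.part z0 := P.eq_of_mem_parts hC hsP (hsub (ρ.mem_part (mem_univ x))) hx
        rw [← hCs]
        exact hsub (otherFn_mem hc x)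
      · obtain ⟨B, hB, hxB, hgB⟩ := (hρ₀ x (gg x)).2 (half_gg x).symm
        obtain ⟨C, hC, hsub⟩ := hρ₀P hB
        have hCs : C = P.part z0 := P.eq_of_mem_parts hC hsP (hsub hxB) hx
        rw [← hCs]
        exact hsub hgB
    have hsu : P.part z0 = Finset.univ := hconn _ ⟨z0, P.mem_part (mem_univ z0)⟩ hscl
    have huP := hsP
    rw [hsu] at huP
    exact top_of_univ_mem huP

variable {m : ℕ}

lemma exists_partition (f : Fin (2*m) → Fin (2*m)) (hf : ∀ x, f (f x) = x)
    (hfne : ∀ x, f x ≠ x) :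
    ∃ ρ : Finpartition (Finset.univ : Finset (Fin (2*m))),
      (∀ B ∈ ρ.parts, B.card = 2) ∧ otherFn ρ = f := by
  set st : Setoid (Fin (2*m)) :=
    ⟨fun x y => y = x ∨ y = f x, by
      constructor
      · intro x; exact Or.inl rfl
      · rintro x y (rfl | rfl)
        · exact Or.inl rfl
        · right; rw [hf]
      · rintro x y z (rfl | rfl) h
        · exact h
        · rcases h with rfl | rfl
          · exact Or.inr rfl
          · rw [hf]; exact Or.inl rfl⟩ with hst
  haveI : DecidableRel st.r := fun x y => inferInstanceAs (Decidable (_ ∨ _))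
  set ρ := Finpartition.ofSetoid st with hρ
  have hpart : ∀ x : Fin (2*m), ρ.part x = {x, f x} := by
    intro x
    ext y
    rw [Finpartition.mem_part_ofSetoid_iff_rel]
    show (y = x ∨ y = f x) ↔ _
    rw [mem_insert, mem_singleton]
  have hc : ∀ B ∈ ρ.parts, B.card = 2 := by
    intro B hB
    obtain ⟨x, hx⟩ := ρ.nonempty_of_mem_parts hB
    rw [← ρ.part_eq_of_mem hB hx, hpart, card_pair (fun h => hfne x h.symm)]
  refine ⟨ρ, hc, funext fun x => ?_⟩
  have h1 := otherFn_mem hc x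
  rw [hpart, mem_insert, mem_singleton] at h1
  rcases h1 with h1 | h1
  · exact absurd h1 (otherFn_ne hc x)
  · exact h1

variable {m : ℕ}

def z0 (hm : 0 < m) : Fin (2*m) := ⟨0, by omega⟩

noncomputable def tr (hm : 0 < m) (f : Fin (2*m) → Fin (2*m)) (k : ℕ) : Fin (2*m) :=
  (fun x => f (gg x))^[k] (z0 hm)

lemma tr_zero (hm : 0 < m) (f : Fin (2*m) → Fin (2*m)) : tr hm f 0 = z0 hm := rfl

lemma tr_succ (hm : 0 < m) (f : Fin (2*m) → Fin (2*m)) (k : ℕ) :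
    tr hm f (k+1) = f (gg (tr hm f k)) := Function.iterate_succ_apply' _ _ _

lemma tour_main (hm : 0 < m) (f : Fin (2*m) → Fin (2*m)) (hf : ∀ x, f (f x) = x)
    (hfne : ∀ x, f x ≠ x) (hconn : Conn f) :
    tr hm f m = z0 hm ∧
    (∀ i j, i < m → j < m → (tr hm f i).val / 2 = (tr hm f j).val / 2 → i = j) ∧
    (∀ x, ∃ k, k < m ∧ (x = tr hm f k ∨ x = gg (tr hm f k))) := by
  have hfinj : Function.Injective f := fun a b h => by rw [← hf a, h, hf]
  have hginj : Function.Injective (gg : Fin (2*m) → Fin (2*m)) :=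
    fun a b h => by rw [← gg_gg a, h, gg_gg]
  have hcinj : Function.Injective (fun x : Fin (2*m) => f (gg x)) :=
    fun a b h => hginj (hfinj h)
  have keyback : ∀ a b, a < b → tr hm f a = tr hm f b → tr hm f (b - a) = z0 hm := by
    intro a b hab heq
    have h0 : tr hm f (a + (b - a)) = (fun x => f (gg x))^[a] (tr hm f (b - a)) :=
      Function.iterate_add_apply _ a (b-a) _
    have heq' : tr hm f a = (fun x => f (gg x))^[a] (tr hm f (b - a)) := by
      rw [← h0, show a + (b-a) = b from by omega]
      exact heq
    exact ((hcinj.iterate a) heq').symm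
  have hex : ∃ n, 0 < n ∧ tr hm f n = z0 hm := by
    obtain ⟨a, b, hne, heq⟩ := Finite.exists_ne_map_eq_of_infinite (tr hm f)
    rcases Nat.lt_or_ge a b with h | h
    · exact ⟨b - a, by omega, keyback a b h heq⟩
    · have h' : b < a := by omega
      exact ⟨a - b, by omega, keyback b a h' heq.symm⟩
  obtain ⟨r, ⟨hrpos, hrz⟩, hminP⟩ :
      ∃ r, (0 < r ∧ tr hm f r = z0 hm) ∧ ∀ k < r, ¬(0 < k ∧ tr hm f k = z0 hm) :=
    ⟨Nat.find hex, Nat.find_spec hex, fun k hk => Nat.find_min hex hk⟩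
  have hmin : ∀ k, 0 < k → k < r → tr hm f k ≠ z0 hm :=
    fun k h1 h2 hk => hminP k h2 ⟨h1, hk⟩
  have hper1 : ∀ k, tr hm f (k + r) = tr hm f k := by
    intro k
    show (fun x => f (gg x))^[k + r] (z0 hm) = _
    rw [Function.iterate_add_apply]
    show (fun x => f (gg x))^[k] (tr hm f r) = _
    rw [hrz]
    rfl
  have hper : ∀ q k, tr hm f (k + r*q) = tr hm f k := by
    intro q
    induction q with
    | zero => intro k; simp
    | succ n ih =>
        intro k
        have h1 : k + r*(n+1) = (k + r) + r*n := by ring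
        rw [h1, ih, hper1]
  have hmod : ∀ k, tr hm f k = tr hm f (k % r) := by
    intro k
    conv_lhs => rw [← Nat.mod_add_div k r]
    exact hper _ _
  have hinj : ∀ i j, i < r → j < r → tr hm f i = tr hm f j → i = j := by
    have aux : ∀ i j, i < j → j < r → tr hm f i = tr hm f j → False := by
      intro i j hij hjr heq
      exact hmin (j - i) (by omega) (by omega) (keyback i j hij heq)
    intro i j hi hj heq
    rcases Nat.lt_trichotomy i j with h | h | h
    · exact absurd heq (fun he => aux i j h hj he)
    · exact h
    · exact absurd heq.symm (fun he => aux j i h hi he)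
  set S : Finset (Fin (2*m)) :=
    (range r).image (tr hm f) ∪ (range r).image (fun k => gg (tr hm f k)) with hSdef
  have hmemS1 : ∀ k, k < r → tr hm f k ∈ S := by
    intro k hk
    exact mem_union_left _ (mem_image.2 ⟨k, mem_range.2 hk, rfl⟩)
  have hmemS2 : ∀ k, k < r → gg (tr hm f k) ∈ S := by
    intro k hk
    exact mem_union_right _ (mem_image.2 ⟨k, mem_range.2 hk, rfl⟩)
  have hSmem : ∀ x ∈ S, ∃ k, k < r ∧ (x = tr hm f k ∨ x = gg (tr hm f k)) := by
    intro x hx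
    rcases mem_union.1 hx with hx | hx
    · obtain ⟨k, hk, rfl⟩ := mem_image.1 hx
      exact ⟨k, mem_range.1 hk, Or.inl rfl⟩
    · obtain ⟨k, hk, rfl⟩ := mem_image.1 hx
      exact ⟨k, mem_range.1 hk, Or.inr rfl⟩
  have hfstep : ∀ k, f (tr hm f (k+1)) = gg (tr hm f k) := by
    intro k
    rw [tr_succ, hf]
  have hScl : ∀ x ∈ S, f x ∈ S ∧ gg x ∈ S := by
    intro x hx
    obtain ⟨k, hk, hcase⟩ := hSmem x hx
    constructor
    · rcases hcase with rfl | rfl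
      · rcases Nat.eq_zero_or_pos k with rfl | hkpos
        · have h0 : tr hm f 0 = tr hm f ((r-1)+1) := by
            have : (r-1)+1 = r := by omega
            rw [this, hrz, tr_zero]
          rw [h0, hfstep]
          exact hmemS2 (r-1) (by omega)
        · have hk1 : k = (k-1)+1 := by omega
          rw [hk1, hfstep]
          exact hmemS2 (k-1) (by omega)
      · have : f (gg (tr hm f k)) = tr hm f (k+1) := (tr_succ hm f k).symm
        rw [this, hmod (k+1)]
        exact hmemS1 _ (Nat.mod_lt _ hrpos)
    · rcases hcase with rfl | rfl
      · exact hmemS2 _ hk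
      · rw [gg_gg]
        exact hmemS1 _ hk
  have hSuniv : S = Finset.univ :=
    hconn S ⟨z0 hm, by rw [← tr_zero hm f]; exact hmemS1 0 hrpos⟩ hScl
  have hmr : m ≤ r := by
    have h1 : (Finset.univ : Finset (Fin (2*m))).card = 2*m := by
      rw [card_univ, Fintype.card_fin]
    have h2 : S.card ≤ r + r := by
      calc S.card ≤ ((range r).image (tr hm f)).card
            + ((range r).image (fun k => gg (tr hm f k))).card := card_union_le _ _
        _ ≤ r + r := by
            gcongr <;> exact (card_image_le).trans (le_of_eq (card_range r))
    rw [hSuniv, h1] at *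
    omega
  have hhalfne : ∀ i j, i < j → j < r → (tr hm f i).val/2 ≠ (tr hm f j).val/2 := by
    intro i j hij hjr heq
    rcases eq_or_eq_gg heq with h | h
    · have := hinj j i hjr (lt_trans hij hjr) h
      omega
    · have descent : ∀ t, 2*t ≤ j - i → tr hm f (j - t) = gg (tr hm f (i + t)) := by
        intro t
        induction t with
        | zero => intro _; simpa using h
        | succ n ih =>
            intro hle
            have h1 := ih (by omega)
            have hjn : j - n = (j - (n+1)) + 1 := by omega
            rw [hjn, tr_succ] at h1
            have h2 : gg (tr hm f (j - (n+1))) = f (gg (tr hm f (i+n))) := by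
              rw [← h1, hf]
            rw [← tr_succ hm f (i+n)] at h2
            have h3 := congrArg gg h2
            rw [gg_gg] at h3
            have hidx : i + (n+1) = (i + n) + 1 := by omega
            rw [hidx]
            exact h3
      rcases Nat.even_or_odd (j - i) with ⟨t, ht⟩ | ⟨t, ht⟩
      · have hd := descent t (by omega)
        have hidx : j - t = i + t := by omega
        rw [hidx] at hd
        exact gg_ne _ hd.symm
      · have hd := descent t (by omega)
        have hidx : j - t = (i + t) + 1 := by omega
        rw [hidx, tr_succ] at hd
        exact hfne _ hd
  have hrm : r ≤ m := by
    by_contra hcon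
    push_neg at hcon
    have hlt : ∀ i : Fin (m+1), (tr hm f i.val).val/2 < m := by
      intro i
      have := (tr hm f i.val).2
      omega
    have hinj2 : Function.Injective (fun i : Fin (m+1) => (⟨(tr hm f i.val).val/2, hlt i⟩ : Fin m)) := by
      intro a b hab
      have hab' : (tr hm f a.val).val/2 = (tr hm f b.val).val/2 := by
        have := congrArg Fin.val hab
        simpa using this
      rcases Nat.lt_trichotomy a.val b.val with h | h | h
      · exact absurd hab' (hhalfne _ _ h (by omega))
      · exact Fin.ext h
      · exact absurd hab'.symm (hhalfne _ _ h (by omega))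
    have := Fintype.card_le_of_injective _ hinj2
    simp [Fintype.card_fin] at this
  have hreq : r = m := le_antisymm hrm hmr
  subst hreq
  refine ⟨hrz, ?_, ?_⟩
  · intro i j hi hj heq
    rcases Nat.lt_trichotomy i j with h | h | h
    · exact absurd heq (hhalfne i j h hj)
    · exact h
    · exact absurd heq.symm (hhalfne j i h hi)
  · intro x
    exact hSmem x (hSuniv ▸ mem_univ x)

variable {m : ℕ}

lemma tr_inj_good (hm : 0 < m) (f f' : Fin (2*m) → Fin (2*m))
    (hf : ∀ x, f (f x) = x) (hfne : ∀ x, f x ≠ x) (hconn : Conn f)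
    (hf' : ∀ x, f' (f' x) = x) (hfne' : ∀ x, f' x ≠ x) (hconn' : Conn f')
    (h : ∀ k, k < m → tr hm f k = tr hm f' k) : f = f' := by
  obtain ⟨hz, _, hcov⟩ := tour_main hm f hf hfne hconn
  obtain ⟨hz', _, _⟩ := tour_main hm f' hf' hfne' hconn'
  have hall : ∀ k, k ≤ m → tr hm f k = tr hm f' k := by
    intro k hk
    rcases Nat.lt_or_ge k m with hlt | hge
    · exact h k hlt
    · have hkm : k = m := by omega
      rw [hkm, hz, hz']
  have hstep : ∀ (g : Fin (2*m) → Fin (2*m)) (hg : ∀ x, g (g x) = x) (k : ℕ),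
      g (tr hm g (k+1)) = gg (tr hm g k) := by
    intro g hg k
    rw [tr_succ, hg]
  funext x
  obtain ⟨k, hk, hcase⟩ := hcov x
  rcases hcase with rfl | rfl
  · rcases Nat.eq_zero_or_pos k with rfl | hkpos
    · have e1 : tr hm f 0 = tr hm f ((m-1)+1) := by
        rw [show (m-1)+1 = m from by omega, hz, tr_zero]
      have e2 : tr hm f 0 = tr hm f' ((m-1)+1) := by
        rw [show (m-1)+1 = m from by omega, hz', tr_zero]
      calc f (tr hm f 0) = f (tr hm f ((m-1)+1)) := by rw [← e1]
        _ = gg (tr hm f (m-1)) := hstep f hf _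
        _ = gg (tr hm f' (m-1)) := by rw [hall (m-1) (by omega)]
        _ = f' (tr hm f' ((m-1)+1)) := (hstep f' hf' _).symm
        _ = f' (tr hm f 0) := by rw [← e2]
    · have hk1 : k = (k-1)+1 := by omega
      calc f (tr hm f k) = f (tr hm f ((k-1)+1)) := by rw [← hk1]
        _ = gg (tr hm f (k-1)) := hstep f hf _
        _ = gg (tr hm f' (k-1)) := by rw [hall (k-1) (by omega)]
        _ = f' (tr hm f' ((k-1)+1)) := (hstep f' hf' _).symm
        _ = f' (tr hm f' k) := by rw [← hk1]
        _ = f' (tr hm f k) := by rw [hall k (le_of_lt hk)]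
  · calc f (gg (tr hm f k)) = tr hm f (k+1) := (tr_succ hm f k).symm
      _ = tr hm f' (k+1) := hall (k+1) (by omega)
      _ = f' (gg (tr hm f' k)) := tr_succ hm f' k
      _ = f' (gg (tr hm f k)) := by rw [hall k (le_of_lt hk)]

lemma exists_good_of_tour_data (hm : 0 < m) (p : Fin m → Fin (2*m))
    (hp0 : p ⟨0, hm⟩ = ⟨0, by omega⟩)
    (hpinj : Function.Injective fun i => (p i).val / 2) :
    ∃ f : Fin (2*m) → Fin (2*m), (∀ x, f (f x) = x) ∧ (∀ x, f x ≠ x) ∧ Conn f ∧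
      ∀ k : ℕ, tr hm f k = p ⟨k % m, Nat.mod_lt k hm⟩ := by
  classical
  set P : ℕ → Fin (2*m) := fun k => p ⟨k % m, Nat.mod_lt k hm⟩ with hPdef
  have hPcong : ∀ k l, k % m = l % m → P k = P l := by
    intro k l hkl
    simp only [hPdef, hkl]
  have hPadd : ∀ k, P (k + m) = P k := fun k => hPcong _ _ (Nat.add_mod_right k m)
  have hPmod : ∀ k t, P (k % m + t) = P (k + t) :=
    fun k t => hPcong _ _ ((Nat.mod_modEq k m).add_right t)
  have hpP : ∀ i : Fin m, p i = P i.val := by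
    intro i
    simp only [hPdef]
    congr 1
    exact (Fin.ext (Nat.mod_eq_of_lt i.2)).symm
  have hpsurj : Function.Surjective (fun i : Fin m => (⟨(p i).val/2, by have := (p i).2; omega⟩ : Fin m)) := by
    apply Finite.injective_iff_surjective.1
    intro a b hab
    apply hpinj
    exact congrArg Fin.val hab
  have hcover : ∀ x : Fin (2*m), ∃ i : Fin m, x = p i ∨ x = gg (p i) := by
    intro x
    obtain ⟨i, hi⟩ := hpsurj ⟨x.val/2, by have := x.2; omega⟩
    have : (p i).val/2 = x.val/2 := congrArg Fin.val hi
    exact ⟨i, eq_or_eq_gg this⟩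
  choose idx hid using hcover
  have hidxval : ∀ x, (p (idx x)).val / 2 = x.val / 2 := by
    intro x
    rcases hid x with h | h
    · have hv : x.val = (p (idx x)).val := congrArg Fin.val h
      rw [hv]
    · have hv : x.val = (gg (p (idx x))).val := congrArg Fin.val h
      rw [hv]
      exact (half_gg _).symm
  have hidxp : ∀ i : Fin m, idx (p i) = i := by
    intro i
    apply hpinj
    exact hidxval (p i)
  have hidxgg : ∀ i : Fin m, idx (gg (p i)) = i := by
    intro i
    apply hpinj
    show (p (idx (gg (p i)))).val / 2 = (p i).val / 2
    rw [hidxval (gg (p i)), half_gg]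
  set f : Fin (2*m) → Fin (2*m) := fun x =>
    if x = p (idx x) then gg (P ((idx x).val + (m-1))) else P ((idx x).val + 1) with hfdef
  have key1 : ∀ i : Fin m, f (p i) = gg (P (i.val + (m-1))) := by
    intro i
    show (if p i = p (idx (p i)) then _ else _) = _
    rw [hidxp i, if_pos rfl]
  have key2 : ∀ i : Fin m, f (gg (p i)) = P (i.val + 1) := by
    intro i
    show (if gg (p i) = p (idx (gg (p i))) then _ else _) = _
    rw [hidxgg i, if_neg (gg_ne (p i))]
  have key1' : ∀ k : ℕ, f (P k) = gg (P (k + (m-1))) := by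
    intro k
    have h1 : P k = p ⟨k % m, Nat.mod_lt k hm⟩ := rfl
    rw [h1, key1]
    exact congrArg gg (hPmod k (m-1))
  have key2' : ∀ k : ℕ, f (gg (P k)) = P (k + 1) := by
    intro k
    have h1 : P k = p ⟨k % m, Nat.mod_lt k hm⟩ := rfl
    rw [h1, key2]
    exact hPmod k 1
  have hcoverP : ∀ x : Fin (2*m), ∃ k : ℕ, x = P k ∨ x = gg (P k) := by
    intro x
    rcases hid x with h | h
    · exact ⟨(idx x).val, Or.inl (by rw [← hpP]; exact h)⟩
    · exact ⟨(idx x).val, Or.inr (by rw [← hpP]; exact h)⟩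
  have hPhalf : ∀ k l, (P k).val / 2 = (P l).val / 2 → P k = P l := by
    intro k l hkl
    have := hpinj hkl
    simp only [hPdef]
    rw [show (⟨k % m, Nat.mod_lt k hm⟩ : Fin m) = ⟨l % m, Nat.mod_lt l hm⟩ from this]
  have hinvol : ∀ x, f (f x) = x := by
    intro x
    obtain ⟨k, hc⟩ := hcoverP x
    rcases hc with rfl | rfl
    · rw [key1', key2', show k + (m-1) + 1 = k + m from by omega, hPadd]
    · rw [key2', key1', show k + 1 + (m-1) = k + m from by omega, hPadd]
  have hnofix : ∀ x, f x ≠ x := by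
    intro x
    obtain ⟨k, hc⟩ := hcoverP x
    rcases hc with rfl | rfl
    · rw [key1']
      intro heq
      have hh : (P (k + (m-1))).val / 2 = (P k).val / 2 := by
        rw [← half_gg (P (k + (m-1))), heq]
      have := hPhalf _ _ hh
      rw [this] at heq
      exact gg_ne _ heq
    · rw [key2']
      intro heq
      have hh : (P (k+1)).val / 2 = (P k).val / 2 := by
        rw [heq, half_gg]
      rw [hPhalf _ _ hh] at heq
      exact (gg_ne (P k)) heq.symm
  have hconn : Conn f := by
    intro s hsne hscl
    obtain ⟨x, hx⟩ := hsne
    obtain ⟨k, hc⟩ := hcoverP x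
    have hPk : P k ∈ s := by
      rcases hc with rfl | rfl
      · exact hx
      · have := (hscl _ hx).2
        rwa [gg_gg] at this
    have hall : ∀ t : ℕ, P (k + t) ∈ s := by
      intro t
      induction t with
      | zero => simpa using hPk
      | succ n ih =>
          have h1 : gg (P (k + n)) ∈ s := (hscl _ ih).2
          have h2 : f (gg (P (k + n))) ∈ s := (hscl _ h1).1
          rw [key2'] at h2
          rw [show k + (n+1) = (k + n) + 1 from by omega]
          exact h2
    have hallP : ∀ l : ℕ, P l ∈ s := by
      intro l
      have hkm : k % m < m := Nat.mod_lt k hm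
      have hdm := Nat.div_add_mod k m
      have ht : k + (l + m - k % m) = m * (k / m) + (l + m) := by omega
      have hmod : (k + (l + m - k % m)) % m = l % m := by
        rw [ht, Nat.mul_add_mod, Nat.add_mod_right]
      have := hall (l + m - k % m)
      rwa [hPcong _ _ hmod] at this
    apply Finset.eq_univ_iff_forall.2
    intro y
    obtain ⟨l, hc'⟩ := hcoverP y
    rcases hc' with rfl | rfl
    · exact hallP l
    · exact (hscl _ (hallP l)).2
  have htr : ∀ k : ℕ, tr hm f k = P k := by
    intro k
    induction k with
    | zero =>
        rw [tr_zero]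
        show z0 hm = p ⟨0 % m, Nat.mod_lt 0 hm⟩
        rw [show (⟨0 % m, Nat.mod_lt 0 hm⟩ : Fin m) = ⟨0, hm⟩ from Fin.ext (Nat.zero_mod m), hp0]
        rfl
    | succ n ih =>
        rw [tr_succ, ih, key2']
  exact ⟨f, hinvol, hnofix, hconn, htr⟩

variable {m : ℕ}

lemma card_SU (hm : 0 < m) :
    Nat.card {p : Fin m → Fin (2*m) // p ⟨0, hm⟩ = ⟨0, by omega⟩ ∧
      Function.Injective fun i : Fin m => (p i).val / 2}
      = Nat.factorial (m-1) * 2^(m-1) := by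
  classical
  have hb1 : ∀ i : Fin (m-1), i.val + 1 < m := fun i => by have := i.2; omega
  have hk1 : ∀ k : Fin m, ¬ k.val = 0 → k.val - 1 < m - 1 := fun k hk => by
    have := k.2; omega
  have hge1 : ∀ (p : Fin m → Fin (2*m)), p ⟨0, hm⟩ = ⟨0, by omega⟩ →
      (Function.Injective fun i : Fin m => (p i).val / 2) →
      ∀ j : Fin m, j.val ≠ 0 → 1 ≤ (p j).val / 2 := by
    intro p hp0 hpinj j hj
    by_contra hcon
    have h0' : (p ⟨0, hm⟩).val = 0 := by rw [hp0]
    have := hpinj (a₁ := j) (a₂ := ⟨0, hm⟩)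
      (show (p j).val / 2 = (p ⟨0, hm⟩).val / 2 by omega)
    exact hj (congrArg Fin.val this)
  have e : {p : Fin m → Fin (2*m) // p ⟨0, hm⟩ = ⟨0, by omega⟩ ∧
      Function.Injective fun i : Fin m => (p i).val / 2} ≃
      ((Fin (m-1) ↪ Fin (m-1)) × (Fin (m-1) → Fin 2)) := by
    refine Equiv.ofBijective (fun ps =>
      (⟨fun i => ⟨(ps.1 ⟨i.val+1, hb1 i⟩).val / 2 - 1, by
          have h2 := (ps.1 ⟨i.val+1, hb1 i⟩).2
          have hi := i.2
          omega⟩, ?_⟩,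
       fun i => ⟨(ps.1 ⟨i.val+1, hb1 i⟩).val % 2, by omega⟩)) ⟨?_, ?_⟩
    · -- injectivity of the q-component
      intro a b hab
      have hab' : (ps.1 ⟨a.val+1, hb1 a⟩).val / 2 - 1
          = (ps.1 ⟨b.val+1, hb1 b⟩).val / 2 - 1 := congrArg Fin.val hab
      have ha1 := hge1 ps.1 ps.2.1 ps.2.2 ⟨a.val+1, hb1 a⟩ (Nat.succ_ne_zero _)
      have hb1' := hge1 ps.1 ps.2.1 ps.2.2 ⟨b.val+1, hb1 b⟩ (Nat.succ_ne_zero _)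
      have heq : (ps.1 ⟨a.val+1, hb1 a⟩).val / 2 = (ps.1 ⟨b.val+1, hb1 b⟩).val / 2 := by
        omega
      have h3 := ps.2.2 heq
      have hv : a.val + 1 = b.val + 1 := congrArg Fin.val h3
      exact Fin.ext (by omega)
    · -- injectivity of the whole map
      intro ps ps' h
      apply Subtype.ext
      funext k
      rcases Nat.eq_zero_or_pos k.val with hk0 | hkpos
      · have hk : k = ⟨0, hm⟩ := Fin.ext hk0
        rw [hk, ps.2.1, ps'.2.1]
      · have hklt : k.val - 1 < m - 1 := hk1 k (by omega)
        have hki : k = ⟨(⟨k.val - 1, hklt⟩ : Fin (m-1)).val + 1,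
            hb1 ⟨k.val - 1, hklt⟩⟩ :=
          Fin.ext (show k.val = k.val - 1 + 1 by omega)
        have hq : (ps.1 ⟨(⟨k.val - 1, hklt⟩ : Fin (m-1)).val+1, hb1 _⟩).val / 2 - 1
            = (ps'.1 ⟨(⟨k.val - 1, hklt⟩ : Fin (m-1)).val+1, hb1 _⟩).val / 2 - 1 :=
          congrArg (fun t : ((Fin (m-1) ↪ Fin (m-1)) × (Fin (m-1) → Fin 2)) =>
            (t.1 ⟨k.val - 1, hklt⟩).val) h
        have hs : (ps.1 ⟨(⟨k.val - 1, hklt⟩ : Fin (m-1)).val+1, hb1 _⟩).val % 2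
            = (ps'.1 ⟨(⟨k.val - 1, hklt⟩ : Fin (m-1)).val+1, hb1 _⟩).val % 2 :=
          congrArg (fun t : ((Fin (m-1) ↪ Fin (m-1)) × (Fin (m-1) → Fin 2)) =>
            (t.2 ⟨k.val - 1, hklt⟩).val) h
        have hg1 := hge1 ps.1 ps.2.1 ps.2.2 ⟨(⟨k.val - 1, hklt⟩ : Fin (m-1)).val+1, hb1 _⟩
          (Nat.succ_ne_zero _)
        have hg2 := hge1 ps'.1 ps'.2.1 ps'.2.2 ⟨(⟨k.val - 1, hklt⟩ : Fin (m-1)).val+1, hb1 _⟩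
          (Nat.succ_ne_zero _)
        rw [hki]
        exact Fin.ext (by omega)
    · -- surjectivity
      rintro ⟨q, s⟩
      refine ⟨⟨fun k => if h : k.val = 0 then ⟨0, by omega⟩ else
        ⟨2*((q ⟨k.val-1, hk1 k h⟩).val+1) + (s ⟨k.val-1, hk1 k h⟩).val, by
            have h1 := (q ⟨k.val-1, hk1 k h⟩).2
            have h2 := (s ⟨k.val-1, hk1 k h⟩).2
            omega⟩, dif_pos rfl, ?_⟩, ?_⟩
      · -- injectivity of halves
        intro a b hab
        simp only [] at hab
        by_cases ha : a.val = 0 <;> by_cases hb : b.val = 0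
        · exact Fin.ext (by omega)
        · exfalso
          rw [dif_pos ha, dif_neg hb] at hab
          have h2 := (s ⟨b.val-1, hk1 b hb⟩).2
          have hv : (0:ℕ) / 2
              = (2*((q ⟨b.val-1, hk1 b hb⟩).val+1) + (s ⟨b.val-1, hk1 b hb⟩).val) / 2 := hab
          omega
        · exfalso
          rw [dif_pos hb, dif_neg ha] at hab
          have h2 := (s ⟨a.val-1, hk1 a ha⟩).2
          have hv : (2*((q ⟨a.val-1, hk1 a ha⟩).val+1) + (s ⟨a.val-1, hk1 a ha⟩).val) / 2
              = (0:ℕ) / 2 := hab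
          omega
        · rw [dif_neg ha, dif_neg hb] at hab
          have h2 := (s ⟨a.val-1, hk1 a ha⟩).2
          have h3 := (s ⟨b.val-1, hk1 b hb⟩).2
          have hv : (2*((q ⟨a.val-1, hk1 a ha⟩).val+1) + (s ⟨a.val-1, hk1 a ha⟩).val) / 2
              = (2*((q ⟨b.val-1, hk1 b hb⟩).val+1) + (s ⟨b.val-1, hk1 b hb⟩).val) / 2 := hab
          have hqeq : (q ⟨a.val-1, hk1 a ha⟩).val = (q ⟨b.val-1, hk1 b hb⟩).val := by omega
          have := q.injective (Fin.ext hqeq)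
          have hveq : a.val - 1 = b.val - 1 := congrArg Fin.val this
          exact Fin.ext (by omega)
      · -- round trip
        have hne : ∀ i : Fin (m-1), ¬ ((⟨i.val+1, hb1 i⟩ : Fin m).val = 0) :=
          fun i => Nat.succ_ne_zero _
        have hidx : ∀ i : Fin (m-1),
            (⟨(⟨i.val+1, hb1 i⟩ : Fin m).val - 1, hk1 _ (hne i)⟩ : Fin (m-1)) = i :=
          fun i => Fin.ext (show i.val + 1 - 1 = i.val by omega)
        apply Prod.ext
        · apply DFunLike.ext
          intro i
          apply Fin.ext
          show (dite _ _ _ : Fin (2*m)).val / 2 - 1 = (q i).val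
          rw [dif_neg (hne i)]
          simp only [hidx i]
          have h2 := (s i).2
          show (2*((q i).val+1) + (s i).val) / 2 - 1 = (q i).val
          omega
        · funext i
          apply Fin.ext
          show (dite _ _ _ : Fin (2*m)).val % 2 = (s i).val
          rw [dif_neg (hne i)]
          simp only [hidx i]
          have h2 := (s i).2
          show (2*((q i).val+1) + (s i).val) % 2 = (s i).val
          omega
  rw [Nat.card_congr e, Nat.card_eq_fintype_card, Fintype.card_prod,
    Fintype.card_embedding_eq, Fintype.card_fin, Nat.descFactorial_self,
    Fintype.card_fun, Fintype.card_fin, Fintype.card_fin]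

end Stmt14


theorem stmt14 (m : ℕ) (hm : 1 ≤ m)
    (ρ₀ : Finpartition (Finset.univ : Finset (Fin (2 * m))))
    (hρ₀ : ∀ x y : Fin (2 * m),
      (∃ B ∈ ρ₀.parts, x ∈ B ∧ y ∈ B) ↔ (x : ℕ) / 2 = (y : ℕ) / 2) :
    {ρ : Finpartition (Finset.univ : Finset (Fin (2 * m))) |
        (∀ B ∈ ρ.parts, B.card = 2) ∧
        ∀ P : Finpartition (Finset.univ : Finset (Fin (2 * m))),
          ρ ≤ P → ρ₀ ≤ P → P = ⊤}.ncard
      = Nat.factorial (m - 1) * 2 ^ (m - 1) := by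
  classical
  have hm' : 0 < m := hm
  rw [← Nat.card_coe_set_eq]
  have key1 : Nat.card {ρ : Finpartition (Finset.univ : Finset (Fin (2 * m))) |
        (∀ B ∈ ρ.parts, B.card = 2) ∧
        ∀ P : Finpartition (Finset.univ : Finset (Fin (2 * m))),
          ρ ≤ P → ρ₀ ≤ P → P = ⊤}
      = Nat.card {f : Fin (2*m) → Fin (2*m) //
          (∀ x, f (f x) = x) ∧ (∀ x, f x ≠ x) ∧ Stmt14.Conn f} := by
    apply Nat.card_congr
    refine Equiv.ofBijective (fun ρs => ⟨Stmt14.otherFn ρs.1,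
      Stmt14.otherFn_invol ρs.2.1,
      fun x => Stmt14.otherFn_ne ρs.2.1 x,
      (Stmt14.join_iff_conn hm' hρ₀ ρs.2.1).1 ρs.2.2⟩) ⟨?_, ?_⟩
    · intro a b hab
      exact Subtype.ext (Stmt14.otherFn_inj a.2.1 b.2.1 (congrArg Subtype.val hab))
    · intro fs
      obtain ⟨ρ, hc, hof⟩ := Stmt14.exists_partition fs.1 fs.2.1 fs.2.2.1
      refine ⟨⟨ρ, hc, (Stmt14.join_iff_conn hm' hρ₀ hc).2 ?_⟩, Subtype.ext hof⟩
      rw [hof]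
      exact fs.2.2.2
  have key2 : Nat.card {f : Fin (2*m) → Fin (2*m) //
          (∀ x, f (f x) = x) ∧ (∀ x, f x ≠ x) ∧ Stmt14.Conn f}
      = Nat.card {p : Fin m → Fin (2*m) // p ⟨0, hm'⟩ = Stmt14.z0 hm' ∧
          Function.Injective fun i : Fin m => (p i).val / 2} := by
    apply Nat.card_congr
    refine Equiv.ofBijective (fun fs => ⟨fun i => Stmt14.tr hm' fs.1 i.val,
      Stmt14.tr_zero hm' fs.1, by
        intro a b hab
        exact Fin.ext ((Stmt14.tour_main hm' fs.1 fs.2.1 fs.2.2.1 fs.2.2.2).2.1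
          a.val b.val a.2 b.2 hab)⟩) ⟨?_, ?_⟩
    · intro a b hab
      apply Subtype.ext
      apply Stmt14.tr_inj_good hm' a.1 b.1 a.2.1 a.2.2.1 a.2.2.2 b.2.1 b.2.2.1 b.2.2.2
      intro k hk
      exact congrFun (congrArg Subtype.val hab) ⟨k, hk⟩
    · intro ps
      obtain ⟨f, h1, h2, h3, htr⟩ :=
        Stmt14.exists_good_of_tour_data hm' ps.1 ps.2.1 ps.2.2
      refine ⟨⟨f, h1, h2, h3⟩, Subtype.ext ?_⟩
      funext i
      show Stmt14.tr hm' f i.val = ps.1 i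
      rw [htr i.val]
      exact congrArg ps.1 (Fin.ext (Nat.mod_eq_of_lt i.2))
  rw [key1, key2]
  exact Stmt14.card_SU hm'
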